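/- Let A be the algebra of S³_q with generators x₁, x₂ satisfying x₁x₂ = q x₂x₁, x₁*x₂ = q x₂x₁*, x₂*x₁ = q x₁x₂*, [x₁,x₁*] = 0, [x₂,x₂*] = (1-q⁻²)x₁x₁*, and x₂*x₂ + x₁*x₁ = 1. Then the 4×4 matrix e = (1/2)[[1, q⁻¹x₁, x₂, 0],[q⁻¹x₁*, 1, 0, x₂],[x₂*, 0, 1, -x₁],[0, x₂*, -x₁*, 1]] satisfies e² = e and e* = e. -/

import Mathlib

set_option maxHeartbeats 1000000 in
/-- The soliton projection on the quantum Euclidean sphere S³_q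
(radius normalized so that x₂*x₂ + x₁*x₁ = 1): the 4×4 matrix e is a
self-adjoint idempotent. -/
theorem stmt9 (A : Type*) [Ring A] [StarRing A] [Algebra ℂ A] [StarModule ℂ A]
    (q : ℝ) (hq : 0 < q) (x1 x2 : A)
    (h12 : x1 * x2 = (q : ℂ) • (x2 * x1))
    (h12s : star x1 * x2 = (q : ℂ) • (x2 * star x1))
    (h21s : star x2 * x1 = (q : ℂ) • (x1 * star x2))
    (hc1 : x1 * star x1 = star x1 * x1)
    (hc2 : x2 * star x2 - star x2 * x2 = ((1 - q⁻¹ ^ 2 : ℝ) : ℂ) • (x1 * star x1))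
    (hrad : star x2 * x2 + star x1 * x1 = 1) :
    let e : Matrix (Fin 4) (Fin 4) A :=
      (1 / 2 : ℂ) •
        !![1, ((q⁻¹ : ℝ) : ℂ) • x1, x2, 0;
           ((q⁻¹ : ℝ) : ℂ) • star x1, 1, 0, x2;
           star x2, 0, 1, -x1;
           0, star x2, -star x1, 1]
    e * e = e ∧ star e = e := by
  intro e
  have hq0 : (q:ℂ) ≠ 0 := by exact_mod_cast ne_of_gt hq
  have hs2s2 : star x2 * x2 = 1 - x1 * star x1 := by
    rw [hc1]; exact eq_sub_of_add_eq hrad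
  have hA1 : x2 * star x2 = 1 - ((q⁻¹ ^ 2 : ℝ) : ℂ) • (x1 * star x1) := by
    have h2 := sub_eq_iff_eq_add.mp hc2
    rw [hs2s2] at h2
    rw [h2]
    push_cast
    rw [sub_smul, one_smul]
    abel
  have hs12 : star x2 * star x1 = (q : ℂ) • (star x1 * star x2) := by
    have := congrArg star h12
    simp only [star_mul, star_smul, Complex.star_def, Complex.conj_ofReal] at this
    exact this
  constructor
  · ext i j
    fin_cases i <;> fin_cases j <;>
      simp [e, Matrix.mul_apply, Fin.sum_univ_four, Matrix.smul_apply, smul_mul_assoc,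
        mul_smul_comm, smul_smul, h12, h12s, h21s, hs12, hc1, hA1, hs2s2] <;>
      match_scalars <;> first | ring1 | ((field_simp; try ring1) <;> simp)
  · ext i j
    fin_cases i <;> fin_cases j <;>
      simp [e, Matrix.smul_apply, Matrix.star_apply, star_smul, Complex.star_def,
        Complex.conj_ofReal]
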